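/- Let Q ∈ ℝ^{N×n} with Q^T Q = I_n, z ∈ ℝ^{N×r}, γ > 0, and let Q^T z = U_z D_z V_z^T be a singular value decomposition with singular values in decreasing order. Then y = U_z (D_z + γ e_1 e_1^T) V_z^T minimizes y ↦ (1/2)‖Qy − z‖_F² − γ σ_1(y), where σ_1(y) is the largest singular value of y. -/

import Mathlib

open Matrix
open scoped Matrix.Norms.L2Operator

lemma enorm_sq {m : ℕ} (v : EuclideanSpace ℝ (Fin m)) : ‖v‖^2 = ∑ i, v i ^2 := by
  rw [EuclideanSpace.norm_eq, Real.sq_sqrt (by positivity)]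
  simp [Real.norm_eq_abs, sq_abs]

lemma equiv_symm_apply {m : ℕ} (v : Fin m → ℝ) (i : Fin m) :
    ((EuclideanSpace.equiv (Fin m) ℝ).symm v) i = v i := rfl

lemma my_opNorm_le {m n : ℕ} (A : Matrix (Fin m) (Fin n) ℝ) {c : ℝ} (hc : 0 ≤ c)
    (h : ∀ x : EuclideanSpace ℝ (Fin n), ‖(EuclideanSpace.equiv (Fin m) ℝ).symm (A *ᵥ x)‖ ≤ c * ‖x‖) :
    ‖A‖ ≤ c := by
  rw [Matrix.l2_opNorm_def]
  exact ContinuousLinearMap.opNorm_le_bound _ hc h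

lemma my_opNorm_le_of_sq {m n : ℕ} (A : Matrix (Fin m) (Fin n) ℝ) {c : ℝ} (hc : 0 ≤ c)
    (h : ∀ x : EuclideanSpace ℝ (Fin n), ∑ i, (A *ᵥ x) i ^ 2 ≤ c^2 * ‖x‖^2) :
    ‖A‖ ≤ c := by
  apply my_opNorm_le A hc
  intro x
  have h2 : ‖(EuclideanSpace.equiv (Fin m) ℝ).symm (A *ᵥ x)‖^2 ≤ c^2 * ‖x‖^2 := by
    rw [enorm_sq]; exact h x
  have h3 : (0:ℝ) ≤ ‖(EuclideanSpace.equiv (Fin m) ℝ).symm (A *ᵥ x)‖ := norm_nonneg _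
  nlinarith [norm_nonneg x, mul_nonneg hc (norm_nonneg x)]

lemma my_opNorm_frob {m n : ℕ} (A : Matrix (Fin m) (Fin n) ℝ) :
    ‖A‖ ≤ Real.sqrt (∑ i, ∑ j, A i j ^ 2) := by
  apply my_opNorm_le_of_sq A (Real.sqrt_nonneg _)
  intro x
  rw [Real.sq_sqrt (by positivity), enorm_sq]
  calc ∑ i, (A *ᵥ x) i ^ 2 ≤ ∑ i, (∑ j, A i j ^2) * (∑ j, x j ^2) := by
        apply Finset.sum_le_sum
        intro i _
        simpa [Matrix.mulVec, dotProduct] using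
          Finset.sum_mul_sq_le_sq_mul_sq Finset.univ (fun j => A i j) (fun j => x j)
    _ = (∑ i, ∑ j, A i j ^ 2) * ∑ j, x j ^2 := by rw [Finset.sum_mul]

lemma my_mulVec_orth {k : ℕ} {W : Matrix (Fin k) (Fin k) ℝ} (hW : Wᵀ * W = 1) (x : Fin k → ℝ) :
    ∑ i, (W *ᵥ x) i ^2 = ∑ i, x i ^2 := by
  have h1 : Wᵀ *ᵥ (W *ᵥ x) = x := by
    rw [Matrix.mulVec_mulVec, hW, Matrix.one_mulVec]
  calc ∑ i, (W *ᵥ x) i ^2 = (W *ᵥ x) ⬝ᵥ (W *ᵥ x) := by simp [dotProduct, sq]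
    _ = ((W *ᵥ x) ᵥ* W) ⬝ᵥ x := by rw [Matrix.dotProduct_mulVec]
    _ = (Wᵀ *ᵥ (W *ᵥ x)) ⬝ᵥ x := by rw [Matrix.mulVec_transpose]
    _ = x ⬝ᵥ x := by rw [h1]
    _ = ∑ i, x i ^2 := by simp [dotProduct, sq]

lemma my_opNorm_orth_left {k r : ℕ} {W : Matrix (Fin k) (Fin k) ℝ} (hW : Wᵀ * W = 1)
    (M : Matrix (Fin k) (Fin r) ℝ) : ‖W * M‖ = ‖M‖ := by
  have key : ∀ (W' : Matrix (Fin k) (Fin k) ℝ), W'ᵀ * W' = 1 →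
      ∀ M' : Matrix (Fin k) (Fin r) ℝ, ‖W' * M'‖ ≤ ‖M'‖ := by
    intro W' hW' M'
    apply my_opNorm_le_of_sq _ (norm_nonneg M')
    intro x
    rw [← Matrix.mulVec_mulVec, my_mulVec_orth hW']
    have hle := Matrix.l2_opNorm_mulVec M' x
    calc ∑ i, (M' *ᵥ x) i ^ 2
        = ‖(EuclideanSpace.equiv (Fin k) ℝ).symm (M' *ᵥ x)‖^2 := by
          rw [enorm_sq]; simp only [equiv_symm_apply]
      _ ≤ ‖M'‖ ^ 2 * ‖x‖ ^ 2 := by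
          nlinarith [norm_nonneg ((EuclideanSpace.equiv (Fin k) ℝ).symm (M' *ᵥ x)),
            norm_nonneg M', norm_nonneg x]
  have hW2 : (Wᵀ)ᵀ * Wᵀ = 1 := by
    rw [Matrix.transpose_transpose, mul_eq_one_comm.mp hW]
  refine le_antisymm (key W hW M) ?_
  have := key Wᵀ hW2 (W * M)
  rwa [← Matrix.mul_assoc, hW, Matrix.one_mul] at this

lemma my_transpose_norm {m n : ℕ} (A : Matrix (Fin m) (Fin n) ℝ) : ‖Aᵀ‖ = ‖A‖ := by
  rw [← Matrix.l2_opNorm_conjTranspose A]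
  congr 1

lemma my_opNorm_orth_right {k r : ℕ} {V : Matrix (Fin r) (Fin r) ℝ} (hV : Vᵀ * V = 1)
    (M : Matrix (Fin k) (Fin r) ℝ) : ‖M * Vᵀ‖ = ‖M‖ := by
  rw [← my_transpose_norm (M * Vᵀ), Matrix.transpose_mul, Matrix.transpose_transpose,
    my_opNorm_orth_left hV, my_transpose_norm]

lemma my_diag_norm {n r : ℕ} (hn : 0 < n) (hr : 0 < r) (M : Matrix (Fin n) (Fin r) ℝ)
    (hdiag : ∀ (i : Fin n) (j : Fin r), (i:ℕ) ≠ (j:ℕ) → M i j = 0)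
    (hpos : ∀ (i : Fin n) (j : Fin r), 0 ≤ M i j)
    (hmax : ∀ (i : Fin n) (j : Fin r), M i j ≤ M ⟨0,hn⟩ ⟨0,hr⟩) : ‖M‖ = M ⟨0,hn⟩ ⟨0,hr⟩ := by
  have h00 : 0 ≤ M ⟨0,hn⟩ ⟨0,hr⟩ := hpos _ _
  refine le_antisymm ?_ ?_
  · apply my_opNorm_le_of_sq _ h00
    intro x
    have step1 : ∀ i : Fin n, (M *ᵥ x) i ^ 2 = ∑ j, (M i j)^2 * x j ^2 := by
      intro i
      show (∑ j, M i j * x j) ^2 = _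
      rw [sq, Finset.sum_mul_sum]
      apply Finset.sum_congr rfl
      intro j _
      rw [Finset.sum_eq_single j]
      · ring
      · intro k _ hk
        rcases eq_or_ne ((j:ℕ)) ((i:ℕ)) with h | h
        · have hki : ((k:ℕ)) ≠ ((i:ℕ)) := fun hc => hk (Fin.ext (hc.trans h.symm))
          rw [hdiag i k (Ne.symm hki)]; ring
        · rw [hdiag i j (Ne.symm h)]; ring
      · intro h; exact absurd (Finset.mem_univ j) h
    calc ∑ i, (M *ᵥ x) i ^2 = ∑ i, ∑ j, (M i j)^2 * x j ^2 :=
          Finset.sum_congr rfl fun i _ => step1 i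
      _ = ∑ j, (∑ i, (M i j)^2) * x j ^2 := by
          rw [Finset.sum_comm]
          exact Finset.sum_congr rfl fun j _ => (Finset.sum_mul ..).symm
      _ ≤ ∑ j, (M ⟨0,hn⟩ ⟨0,hr⟩)^2 * x j ^2 := by
          apply Finset.sum_le_sum
          intro j _
          apply mul_le_mul_of_nonneg_right _ (sq_nonneg _)
          by_cases h : ((j:ℕ)) < n
          · rw [Finset.sum_eq_single (⟨(j:ℕ), h⟩ : Fin n)]
            · exact pow_le_pow_left₀ (hpos _ _) (hmax _ _) 2
            · intro i _ hi
              have hij : ((i:ℕ)) ≠ ((j:ℕ)) := fun hc => hi (Fin.ext hc)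
              rw [hdiag i j hij]; ring
            · intro h'; exact absurd (Finset.mem_univ _) h'
          · rw [Finset.sum_eq_zero]
            · positivity
            · intro i _
              have hij : ((i:ℕ)) ≠ ((j:ℕ)) := by omega
              rw [hdiag i j hij]; ring
      _ = (M ⟨0,hn⟩ ⟨0,hr⟩)^2 * ∑ j, x j ^2 := (Finset.mul_sum ..).symm
      _ = (M ⟨0,hn⟩ ⟨0,hr⟩)^2 * ‖x‖^2 := by rw [enorm_sq x]
  · have hf : ∀ j : Fin r, ((EuclideanSpace.equiv (Fin r) ℝ).symm
        (fun j => if j = (⟨0,hr⟩ : Fin r) then (1:ℝ) else 0)) j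
        = if j = (⟨0,hr⟩ : Fin r) then (1:ℝ) else 0 := fun j => rfl
    set x : EuclideanSpace ℝ (Fin r) := (EuclideanSpace.equiv (Fin r) ℝ).symm
      (fun j => if j = (⟨0,hr⟩ : Fin r) then (1:ℝ) else 0)
    have hxn : ‖x‖ = 1 := by
      have h1 : ‖x‖^2 = 1 := by
        rw [enorm_sq]
        rw [Finset.sum_congr rfl (fun j _ => by rw [hf j])]
        simp [Finset.sum_ite_eq']
      nlinarith [norm_nonneg x]
    have hMx : ∀ i : Fin n, (M *ᵥ x) i = if i = (⟨0,hn⟩ : Fin n) then M ⟨0,hn⟩ ⟨0,hr⟩ else 0 := by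
      intro i
      show ∑ j, M i j * x j = _
      have hterm : ∀ j : Fin r, M i j * x j = if j = (⟨0,hr⟩ : Fin r) then M i ⟨0,hr⟩ else 0 := by
        intro j
        rw [show x j = if j = (⟨0,hr⟩ : Fin r) then (1:ℝ) else 0 from hf j]
        by_cases h : j = (⟨0,hr⟩ : Fin r) <;> simp [h]
      rw [Finset.sum_congr rfl fun j _ => hterm j, Finset.sum_ite_eq' Finset.univ]
      simp only [Finset.mem_univ, if_true]
      by_cases h : i = (⟨0,hn⟩ : Fin n)
      · simp [h]
      · rw [if_neg h, hdiag i ⟨0,hr⟩]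
        intro hc
        exact h (Fin.ext (by simpa using hc))
    have hb := Matrix.l2_opNorm_mulVec M x
    rw [hxn, mul_one] at hb
    refine le_trans ?_ hb
    have hval : ‖(EuclideanSpace.equiv (Fin n) ℝ).symm (M *ᵥ x)‖^2 = (M ⟨0,hn⟩ ⟨0,hr⟩)^2 := by
      rw [enorm_sq]
      have hterm : ∀ i : Fin n, ((EuclideanSpace.equiv (Fin n) ℝ).symm (M *ᵥ x)) i ^2 =
          if i = (⟨0,hn⟩ : Fin n) then (M ⟨0,hn⟩ ⟨0,hr⟩)^2 else 0 := by
        intro i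
        rw [equiv_symm_apply, hMx i]
        by_cases h : i = (⟨0,hn⟩ : Fin n) <;> simp [h]
      rw [Finset.sum_congr rfl fun i _ => hterm i, Finset.sum_ite_eq' Finset.univ]
      simp
    nlinarith [norm_nonneg ((EuclideanSpace.equiv (Fin n) ℝ).symm (M *ᵥ x))]

lemma my_frob_trace {a b : ℕ} (M : Matrix (Fin a) (Fin b) ℝ) :
    ∑ i, ∑ j, M i j ^2 = Matrix.trace (M * Mᵀ) := by
  simp [Matrix.trace, Matrix.mul_apply, Matrix.diag, sq, Matrix.transpose_apply]

lemma my_frob_inv {k r : ℕ} {U : Matrix (Fin k) (Fin k) ℝ} (hU : Uᵀ * U = 1)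
    {V : Matrix (Fin r) (Fin r) ℝ} (hV : Vᵀ * V = 1) (B : Matrix (Fin k) (Fin r) ℝ) :
    ∑ i, ∑ j, (U * B * Vᵀ) i j ^2 = ∑ i, ∑ j, B i j ^2 := by
  rw [my_frob_trace, my_frob_trace]
  have h1 : (U * B * Vᵀ) * (U * B * Vᵀ)ᵀ = U * (B * Bᵀ) * Uᵀ := by
    rw [Matrix.transpose_mul, Matrix.transpose_mul, Matrix.transpose_transpose]
    simp only [Matrix.mul_assoc]
    rw [← Matrix.mul_assoc Vᵀ V, hV, Matrix.one_mul]
  rw [h1, Matrix.trace_mul_cycle, ← Matrix.mul_assoc, hU, Matrix.one_mul]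

lemma my_frob_expand {N n r : ℕ} (Q : Matrix (Fin N) (Fin n) ℝ) (hQ : Qᵀ * Q = 1)
    (z : Matrix (Fin N) (Fin r) ℝ) (y : Matrix (Fin n) (Fin r) ℝ) :
    ∑ i, ∑ j, ((Q * y - z) i j) ^ 2 =
      (∑ i, ∑ j, ((y - Qᵀ * z) i j) ^ 2) +
        ((∑ i, ∑ j, (z i j) ^ 2) - ∑ i, ∑ j, ((Qᵀ * z) i j) ^ 2) := by
  rw [my_frob_trace, my_frob_trace, my_frob_trace, my_frob_trace]
  have e1 : (Q * y - z) * (Q * y - z)ᵀ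
      = Q * y * (Q * y)ᵀ - Q * y * zᵀ - z * (Q * y)ᵀ + z * zᵀ := by
    rw [Matrix.transpose_sub, Matrix.sub_mul, Matrix.mul_sub, Matrix.mul_sub]
    abel
  have e2 : (y - Qᵀ * z) * (y - Qᵀ * z)ᵀ
      = y * yᵀ - y * (Qᵀ * z)ᵀ - (Qᵀ * z) * yᵀ + (Qᵀ * z) * (Qᵀ * z)ᵀ := by
    rw [Matrix.transpose_sub, Matrix.sub_mul, Matrix.mul_sub, Matrix.mul_sub]
    abel
  rw [e1, e2]
  simp only [Matrix.trace_add, Matrix.trace_sub]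
  have hα : Matrix.trace (Q * y * (Q * y)ᵀ) = Matrix.trace (y * yᵀ) := by
    rw [Matrix.transpose_mul, show Q * y * (yᵀ * Qᵀ) = Q * (y * yᵀ * Qᵀ) by
      simp only [Matrix.mul_assoc], Matrix.trace_mul_comm, Matrix.mul_assoc, hQ, Matrix.mul_one]
  have hβ : Matrix.trace (Q * y * zᵀ) = Matrix.trace (y * (Qᵀ * z)ᵀ) := by
    rw [Matrix.transpose_mul, Matrix.transpose_transpose, Matrix.mul_assoc,
      Matrix.trace_mul_comm, Matrix.mul_assoc]
  have hγ : Matrix.trace (z * (Q * y)ᵀ) = Matrix.trace ((Qᵀ * z) * yᵀ) := by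
    rw [Matrix.transpose_mul, ← Matrix.mul_assoc, ← Matrix.trace_mul_cycle, Matrix.mul_assoc,
      Matrix.trace_mul_comm]
  rw [hα, hβ, hγ]
  ring

theorem stmt14 {N n r : ℕ} (hn : 0 < n) (hr : 0 < r)
    (Q : Matrix (Fin N) (Fin n) ℝ) (hQ : Qᵀ * Q = 1)
    (z : Matrix (Fin N) (Fin r) ℝ) (γ : ℝ) (hγ : 0 < γ)
    (U : Matrix (Fin n) (Fin n) ℝ) (hU : Uᵀ * U = 1)
    (V : Matrix (Fin r) (Fin r) ℝ) (hV : Vᵀ * V = 1)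
    (D : Matrix (Fin n) (Fin r) ℝ)
    (hDdiag : ∀ (i : Fin n) (j : Fin r), (i : ℕ) ≠ (j : ℕ) → D i j = 0)
    (hDpos : ∀ (i : Fin n) (j : Fin r), 0 ≤ D i j)
    (hDdec : ∀ (i i' : Fin n) (j j' : Fin r), (i : ℕ) = (j : ℕ) → (i' : ℕ) = (j' : ℕ) →
      i ≤ i' → D i' j' ≤ D i j)
    (hSVD : Qᵀ * z = U * D * Vᵀ) :
    ∀ y : Matrix (Fin n) (Fin r) ℝ,
      (1 / 2) * (∑ i, ∑ j,
          ((Q * (U * (D + single (⟨0, hn⟩ : Fin n) (⟨0, hr⟩ : Fin r) γ) * Vᵀ) - z) i j) ^ 2)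
          - γ * ‖U * (D + single (⟨0, hn⟩ : Fin n) (⟨0, hr⟩ : Fin r) γ) * Vᵀ‖
      ≤ (1 / 2) * (∑ i, ∑ j, ((Q * y - z) i j) ^ 2) - γ * ‖y‖ := by
  intro y
  have hγ' : 0 ≤ γ := le_of_lt hγ
  set i0 : Fin n := ⟨0, hn⟩
  set j0 : Fin r := ⟨0, hr⟩
  set E : Matrix (Fin n) (Fin r) ℝ := single i0 j0 γ with hEdef
  have hE : ∀ (i : Fin n) (j : Fin r), E i j = if i0 = i ∧ j0 = j then γ else 0 := by
    intro i j; rfl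
  -- D bounded by D i0 j0
  have hDmax : ∀ (i : Fin n) (j : Fin r), D i j ≤ D i0 j0 := by
    intro i j
    rcases eq_or_ne ((i : ℕ)) ((j : ℕ)) with h | h
    · exact hDdec i0 i j0 j rfl h (by simp [Fin.le_def, i0])
    · rw [hDdiag i j h]; exact hDpos i0 j0
  -- properties of D + E
  have hD'diag : ∀ (i : Fin n) (j : Fin r), (i : ℕ) ≠ (j : ℕ) → (D + E) i j = 0 := by
    intro i j h
    have hij : ¬(i0 = i ∧ j0 = j) := by
      rintro ⟨rfl, rfl⟩; exact h rfl
    simp [Matrix.add_apply, hDdiag i j h, hE, hij]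
  have hD'pos : ∀ (i : Fin n) (j : Fin r), 0 ≤ (D + E) i j := by
    intro i j
    have : 0 ≤ E i j := by rw [hE]; split <;> simp [hγ']
    have := hDpos i j
    simp only [Matrix.add_apply]; linarith
  have hE00 : E i0 j0 = γ := by rw [hE]; simp
  have hD'max : ∀ (i : Fin n) (j : Fin r), (D + E) i j ≤ (D + E) i0 j0 := by
    intro i j
    simp only [Matrix.add_apply, hE00]
    have h1 := hDmax i j
    have h2 : E i j ≤ γ := by rw [hE]; split <;> simp [hγ']
    linarith
  -- norm of the candidate and of A
  have hnA : ‖U * D * Vᵀ‖ = D i0 j0 := by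
    rw [my_opNorm_orth_right hV, my_opNorm_orth_left hU,
      my_diag_norm hn hr D hDdiag hDpos hDmax]
  have hnY : ‖U * (D + E) * Vᵀ‖ = D i0 j0 + γ := by
    rw [my_opNorm_orth_right hV, my_opNorm_orth_left hU,
      my_diag_norm hn hr (D + E) hD'diag hD'pos hD'max]
    simp [Matrix.add_apply, hE00]
    exact congrArg (D i0 j0 + ·) hE00
  -- Frobenius of candidate minus A
  have hyA : U * (D + E) * Vᵀ - U * D * Vᵀ = U * E * Vᵀ := by
    rw [Matrix.mul_add, Matrix.add_mul]; abel
  have hsumE : ∑ i, ∑ j, E i j ^ 2 = γ ^ 2 := by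
    have : ∀ (i : Fin n) (j : Fin r), E i j ^2 = if i = i0 then (if j = j0 then γ^2 else 0) else 0 := by
      intro i j
      rw [hE]
      by_cases h1 : i = i0 <;> by_cases h2 : j = j0 <;> simp [h1, h2] <;>
        (intro h; exact absurd h.symm (by assumption))
    rw [Finset.sum_congr rfl fun i _ => Finset.sum_congr rfl fun j _ => this i j]
    simp [Finset.sum_ite_eq' Finset.univ]
  have hG1 : ∑ i, ∑ j, ((U * (D + E) * Vᵀ - U * D * Vᵀ) i j) ^2 = γ^2 := by
    rw [hyA, my_frob_inv hU hV, hsumE]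
  -- expand both sides
  have expL := my_frob_expand Q hQ z (U * (D + E) * Vᵀ)
  have expR := my_frob_expand Q hQ z y
  rw [hSVD] at expL expR
  rw [expL, expR, hG1, hnY]
  -- numeric part
  set d : ℝ := D i0 j0 with hd
  have hd0 : 0 ≤ d := hDpos i0 j0
  set G : ℝ := ∑ i, ∑ j, ((y - U * D * Vᵀ) i j) ^2 with hGdef
  have hG0 : 0 ≤ G := Finset.sum_nonneg fun i _ => Finset.sum_nonneg fun j _ => sq_nonneg _
  set t : ℝ := ‖y‖ with ht
  have ht0 : 0 ≤ t := norm_nonneg y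
  have hkey : t ≤ d + Real.sqrt G := by
    have h1 : t ≤ ‖y - U * D * Vᵀ‖ + ‖U * D * Vᵀ‖ := by
      calc t = ‖(y - U * D * Vᵀ) + U * D * Vᵀ‖ := by rw [sub_add_cancel]
        _ ≤ _ := norm_add_le _ _
    have h2 := my_opNorm_frob (y - U * D * Vᵀ)
    rw [hnA] at h1
    rw [← hGdef] at h2
    linarith
  have hsG : Real.sqrt G ^ 2 = G := Real.sq_sqrt hG0
  have hsG0 : 0 ≤ Real.sqrt G := Real.sqrt_nonneg G
  by_cases hcase : t ≤ d
  · nlinarith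
  · push_neg at hcase
    have h3 : (t - d) ^ 2 ≤ G := by
      have := pow_le_pow_left₀ (by linarith : (0:ℝ) ≤ t - d) (by linarith : t - d ≤ Real.sqrt G) 2
      linarith [hsG]
    nlinarith [sq_nonneg (t - d - γ)]
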